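/- If the evaluation of pattern P1 over G does not enlarge the data graph (range of ⟦P1⟧_G equals G), then AND is symmetric: ⟦P1 AND P2⟧_G = ⟦P2 AND P1⟧_G; in particular this holds when P1 and P2 are basic patterns, in which case ⟦P1 AND P2⟧_G equals the set of all total mappings from the query graph P1 ∪ P2 to G. -/

import Mathlib

universe u

structure RDFGraph (A : Type u) where
  N : Set A
  T : Set (A × A × A)
  subj_mem : ∀ t ∈ T, t.1 ∈ N
  obj_mem : ∀ t ∈ T, t.2.2 ∈ N

namespace RDFGraph

variable {A : Type u}

/-- The labels of a graph: its nodes together with the predicates of its triples. -/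
def labels (X : RDFGraph A) : Set A :=
  X.N ∪ {p | ∃ t ∈ X.T, t.2.1 = p}

/-- Componentwise union of graphs. -/
def union (X1 X2 : RDFGraph A) : RDFGraph A where
  N := X1.N ∪ X2.N
  T := X1.T ∪ X2.T
  subj_mem := by
    rintro t (h | h)
    · exact Or.inl (X1.subj_mem t h)
    · exact Or.inr (X2.subj_mem t h)
  obj_mem := by
    rintro t (h | h)
    · exact Or.inl (X1.obj_mem t h)
    · exact Or.inr (X2.obj_mem t h)

/-- Componentwise intersection of graphs. -/
def inter (X1 X2 : RDFGraph A) : RDFGraph A where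
  N := X1.N ∩ X2.N
  T := X1.T ∩ X2.T
  subj_mem := fun t h => ⟨X1.subj_mem t h.1, X2.subj_mem t h.2⟩
  obj_mem := fun t h => ⟨X1.obj_mem t h.1, X2.obj_mem t h.2⟩

/-- `X'` is a subgraph of `X`. -/
def Subgraph (X' X : RDFGraph A) : Prop := X'.N ⊆ X.N ∧ X'.T ⊆ X.T

end RDFGraph

variable {A : Type u}

/-- A morphism of graphs on `A` : a partial function (modelled as an `Option`-valued
function, `none` meaning undefined, and undefined outside the labels of the domain)
from the labels of `X` to the labels of `Y`, preserving nodes and triples. -/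
def IsMorphism (X Y : RDFGraph A) (f : A → Option A) : Prop :=
  (∀ x, x ∉ X.labels → f x = none) ∧
  (∀ x y, f x = some y → y ∈ Y.labels) ∧
  (∀ n ∈ X.N, ∀ y, f n = some y → y ∈ Y.N) ∧
  (∀ t ∈ X.T, ∀ s' p' o', f t.1 = some s' → f t.2.1 = some p' → f t.2.2 = some o' →
    ((s', p', o') : A × A × A) ∈ Y.T)

/-- Composition of partial functions: defined iff both steps are defined. -/
def pcomp (g f : A → Option A) : A → Option A := fun x => (f x).bind g

open Classical in
/-- The identity partial function on the labels of `X`. -/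
noncomputable def idOn (X : RDFGraph A) : A → Option A :=
  fun x => if x ∈ X.labels then some x else none

open Classical in
/-- Restriction of a partial function to the labels of `X'`. -/
noncomputable def restrictMap (X' : RDFGraph A) (f : A → Option A) : A → Option A :=
  fun x => if x ∈ X'.labels then f x else none

/-- Labels are built from three disjoint countably infinite sets:
resource identifiers `i`, blanks `b` and variables `v`. -/
inductive Lbl : Type where
  | i : ℕ → Lbl
  | b : ℕ → Lbl
  | v : ℕ → Lbl
deriving DecidableEq

/-- Being a resource identifier. -/
def Lbl.isI : Lbl → Prop
  | .i _ => True
  | _ => False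

/-- Being a variable. -/
def Lbl.isV : Lbl → Prop
  | .v _ => True
  | _ => False

/-- A data graph is a (finite) graph whose labels are resource identifiers or blanks. -/
def IsDataGraph (Y : RDFGraph Lbl) : Prop := ∀ x ∈ Y.labels, ¬ x.isV

/-- A query graph is a finite graph on `Lbl`. -/
def IsQueryGraph (X : RDFGraph Lbl) : Prop := X.N.Finite ∧ X.T.Finite

/-- A mapping from a query graph `X` to a data graph `Y` is a graph morphism fixing
the resource identifiers. -/
def IsMapping (X Y : RDFGraph Lbl) (m : Lbl → Option Lbl) : Prop :=
  IsMorphism X Y m ∧ ∀ x ∈ X.labels, x.isI → m x = some x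

/-- The blanks and variables among the labels of `X`. -/
def bvLabels (X : RDFGraph Lbl) : Set Lbl := {x | x ∈ X.labels ∧ ¬ x.isI}

/-- Two mappings are compatible if they agree (including definedness) on the common
blanks and variables of their domains. -/
def Compatible (X1 X2 : RDFGraph Lbl) (m1 m2 : Lbl → Option Lbl) : Prop :=
  ∀ x ∈ bvLabels X1 ∩ bvLabels X2, m1 x = m2 x

open Classical in
/-- The join of two compatible mappings: it coincides with `m1` on the labels of `X1`
and with `m2` elsewhere. -/
noncomputable def joinMap (X1 : RDFGraph Lbl) (m1 m2 : Lbl → Option Lbl) : Lbl → Option Lbl :=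
  fun x => if x ∈ X1.labels then m1 x else m2 x

/-- Join of two sets of mappings. -/
noncomputable def JoinSet (X1 X2 : RDFGraph Lbl) (M1 M2 : Set (Lbl → Option Lbl)) :
    Set (Lbl → Option Lbl) :=
  {m | ∃ m1 ∈ M1, ∃ m2 ∈ M2, Compatible X1 X2 m1 m2 ∧ m = joinMap X1 m1 m2}

/-- Restriction of a set of mappings to a subgraph `X'`. -/
noncomputable def RestrictSet (X' : RDFGraph Lbl) (M : Set (Lbl → Option Lbl)) :
    Set (Lbl → Option Lbl) :=
  (restrictMap X') '' M

open Classical in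
/-- Extension by undefined functions `Ext_⊥(m, X')`: new labels in `I` are fixed,
new blanks and variables are left undefined. -/
noncomputable def extBot (X X' : RDFGraph Lbl) (m : Lbl → Option Lbl) : Lbl → Option Lbl :=
  fun x => if x ∈ X.labels then m x else if x ∈ X'.labels ∧ x.isI then some x else none

/-- Union of two sets of mappings: set-theoretic union of their extensions by
undefined functions to the union of their domains. -/
noncomputable def UnionSet (X1 X2 : RDFGraph Lbl) (M1 M2 : Set (Lbl → Option Lbl)) :
    Set (Lbl → Option Lbl) :=
  (extBot X1 (X1.union X2)) '' M1 ∪ (extBot X2 (X1.union X2)) '' M2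

/-- A total mapping: a mapping defined on all the labels of its domain. -/
def TotalMapping (X Y : RDFGraph Lbl) (m : Lbl → Option Lbl) : Prop :=
  IsMapping X Y m ∧ ∀ x ∈ X.labels, m x ≠ none

section Aux

lemma graph_union_comm (X1 X2 : RDFGraph Lbl) : X1.union X2 = X2.union X1 := by
  unfold RDFGraph.union
  congr 1 <;> exact Set.union_comm _ _

lemma labels_union (X1 X2 : RDFGraph Lbl) :
    (X1.union X2).labels = X1.labels ∪ X2.labels := by
  ext x
  simp only [RDFGraph.labels, RDFGraph.union, Set.mem_union, Set.mem_setOf_eq]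
  constructor
  · rintro (h | ⟨t, (ht | ht), rfl⟩)
    · tauto
    · exact Or.inl (Or.inr ⟨t, ht, rfl⟩)
    · exact Or.inr (Or.inr ⟨t, ht, rfl⟩)
  · rintro ((h | ⟨t, ht, rfl⟩) | (h | ⟨t, ht, rfl⟩))
    · tauto
    · exact Or.inr ⟨t, Or.inl ht, rfl⟩
    · tauto
    · exact Or.inr ⟨t, Or.inr ht, rfl⟩

lemma join_eq_right {X1 X2 : RDFGraph Lbl} {m1 m2 : Lbl → Option Lbl} {G : RDFGraph Lbl}
    (h1 : IsMapping X1 G m1) (h2 : IsMapping X2 G m2)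
    (hc : Compatible X1 X2 m1 m2) {x : Lbl} (hx : x ∈ X2.labels) :
    joinMap X1 m1 m2 x = m2 x := by
  unfold joinMap
  by_cases h : x ∈ X1.labels
  · simp only [h, if_true]
    by_cases hi : x.isI
    · rw [h1.2 x h hi, h2.2 x hx hi]
    · exact hc x ⟨⟨h, hi⟩, ⟨hx, hi⟩⟩
  · simp [h]

lemma join_total {X1 X2 G : RDFGraph Lbl} {m1 m2 : Lbl → Option Lbl}
    (h1 : TotalMapping X1 G m1) (h2 : TotalMapping X2 G m2)
    (hc : Compatible X1 X2 m1 m2) :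
    TotalMapping (X1.union X2) G (joinMap X1 m1 m2) := by
  obtain ⟨⟨⟨u1, r1, n1, t1⟩, i1⟩, tot1⟩ := h1
  obtain ⟨⟨⟨u2, r2, n2, t2⟩, i2⟩, tot2⟩ := h2
  have hm1 : IsMapping X1 G m1 := ⟨⟨u1, r1, n1, t1⟩, i1⟩
  have hm2 : IsMapping X2 G m2 := ⟨⟨u2, r2, n2, t2⟩, i2⟩
  have hjl : ∀ x ∈ X1.labels, joinMap X1 m1 m2 x = m1 x := by
    intro x hx; simp [joinMap, hx]
  have hjr : ∀ x ∈ X2.labels, joinMap X1 m1 m2 x = m2 x :=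
    fun x hx => join_eq_right hm1 hm2 hc hx
  refine ⟨⟨⟨?_, ?_, ?_, ?_⟩, ?_⟩, ?_⟩
  · intro x hx
    rw [labels_union] at hx
    have hx1 : x ∉ X1.labels := fun h => hx (Or.inl h)
    have hx2 : x ∉ X2.labels := fun h => hx (Or.inr h)
    simp [joinMap, hx1, u2 x hx2]
  · intro x y hxy
    unfold joinMap at hxy
    split at hxy
    · exact r1 x y hxy
    · exact r2 x y hxy
  · rintro n (hn | hn) y hy
    · rw [hjl n (Or.inl hn)] at hy
      exact n1 n hn y hy
    · rw [hjr n (Or.inl hn)] at hy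
      exact n2 n hn y hy
  · rintro t (ht | ht) s' p' o' hs hp ho
    · have ls : t.1 ∈ X1.labels := Or.inl (X1.subj_mem t ht)
      have lp : t.2.1 ∈ X1.labels := Or.inr ⟨t, ht, rfl⟩
      have lo : t.2.2 ∈ X1.labels := Or.inl (X1.obj_mem t ht)
      rw [hjl _ ls] at hs; rw [hjl _ lp] at hp; rw [hjl _ lo] at ho
      exact t1 t ht s' p' o' hs hp ho
    · have ls : t.1 ∈ X2.labels := Or.inl (X2.subj_mem t ht)
      have lp : t.2.1 ∈ X2.labels := Or.inr ⟨t, ht, rfl⟩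
      have lo : t.2.2 ∈ X2.labels := Or.inl (X2.obj_mem t ht)
      rw [hjr _ ls] at hs; rw [hjr _ lp] at hp; rw [hjr _ lo] at ho
      exact t2 t ht s' p' o' hs hp ho
  · intro x hx hi
    rw [labels_union] at hx
    rcases hx with hx | hx
    · rw [hjl x hx]; exact i1 x hx hi
    · rw [hjr x hx]; exact i2 x hx hi
  · intro x hx
    rw [labels_union] at hx
    rcases hx with hx | hx
    · rw [hjl x hx]; exact tot1 x hx
    · rw [hjr x hx]; exact tot2 x hx

lemma restrict_total {X X' G : RDFGraph Lbl} {m : Lbl → Option Lbl}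
    (hsub : RDFGraph.Subgraph X' X) (h : TotalMapping X G m) :
    TotalMapping X' G (restrictMap X' m) := by
  obtain ⟨⟨⟨u, r, n, t⟩, i⟩, tot⟩ := h
  have hlab : X'.labels ⊆ X.labels := by
    rintro x (hx | ⟨tt, htt, rfl⟩)
    · exact Or.inl (hsub.1 hx)
    · exact Or.inr ⟨tt, hsub.2 htt, rfl⟩
  have hre : ∀ x ∈ X'.labels, restrictMap X' m x = m x := by
    intro x hx; simp [restrictMap, hx]
  refine ⟨⟨⟨?_, ?_, ?_, ?_⟩, ?_⟩, ?_⟩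
  · intro x hx; simp [restrictMap, hx]
  · intro x y hxy
    unfold restrictMap at hxy
    split at hxy
    · exact r x y hxy
    · exact absurd hxy (by simp)
  · intro nn hn y hy
    rw [hre nn (Or.inl hn)] at hy
    exact n nn (hsub.1 hn) y hy
  · intro tt ht s' p' o' hs hp ho
    rw [hre _ (Or.inl (X'.subj_mem tt ht))] at hs
    rw [hre _ (Or.inr ⟨tt, ht, rfl⟩)] at hp
    rw [hre _ (Or.inl (X'.obj_mem tt ht))] at ho
    exact t tt (hsub.2 ht) s' p' o' hs hp ho
  · intro x hx hi
    rw [hre x hx]; exact i x (hlab hx) hi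
  · intro x hx
    rw [hre x hx]; exact tot x (hlab hx)

lemma join_eq_union (X1 X2 G : RDFGraph Lbl) :
    JoinSet X1 X2 {m | TotalMapping X1 G m} {m | TotalMapping X2 G m} =
      {m | TotalMapping (X1.union X2) G m} := by
  ext m
  constructor
  · rintro ⟨m1, h1, m2, h2, hc, rfl⟩
    exact join_total h1 h2 hc
  · intro hm
    have hs1 : RDFGraph.Subgraph X1 (X1.union X2) :=
      ⟨Set.subset_union_left, Set.subset_union_left⟩
    have hs2 : RDFGraph.Subgraph X2 (X1.union X2) :=
      ⟨Set.subset_union_right, Set.subset_union_right⟩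
    refine ⟨restrictMap X1 m, restrict_total hs1 hm, restrictMap X2 m,
      restrict_total hs2 hm, ?_, ?_⟩
    · intro x ⟨⟨hx1, _⟩, ⟨hx2, _⟩⟩
      simp [restrictMap, hx1, hx2]
    · funext x
      unfold joinMap restrictMap
      by_cases h1 : x ∈ X1.labels
      · simp [h1]
      · simp only [h1, if_false]
        by_cases h2 : x ∈ X2.labels
        · simp [h2]
        · simp only [h2, if_false]
          have : x ∉ (X1.union X2).labels := by
            rw [labels_union]; rintro (h | h) <;> [exact h1 h; exact h2 h]
          exact hm.1.1.1 x this

end Aux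

/-- For basic patterns `P1` and `P2` the evaluation over `G` does not enlarge the
data graph, so AND is symmetric: the value of `P1 AND P2` over `G` (the join of the
sets of all total mappings of `P1` and of `P2` into `G`) equals the value of
`P2 AND P1` over `G`, and both equal the set of all total mappings from the query
graph `P1 ∪ P2` to `G`. -/
theorem and_basic_symm (P1 P2 G : RDFGraph Lbl) (hG : IsDataGraph G) :
    JoinSet P1 P2 {m | TotalMapping P1 G m} {m | TotalMapping P2 G m} =
      JoinSet P2 P1 {m | TotalMapping P2 G m} {m | TotalMapping P1 G m} ∧
    JoinSet P1 P2 {m | TotalMapping P1 G m} {m | TotalMapping P2 G m} =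
      {m | TotalMapping (P1.union P2) G m} := by
  have h12 := join_eq_union P1 P2 G
  have h21 := join_eq_union P2 P1 G
  rw [h12, h21, graph_union_comm P2 P1]
  exact ⟨rfl, rfl⟩
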